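/- arXiv:math/9811003 — 16 statements merged into one kernel-verified Lean document; each statement's English description precedes it below -/
import Mathlib

section
/- An arbitrary intersection of sg-closed subsets of a topological space is sg-closed. -/
open Set Topology

variable {X : Type*} [TopologicalSpace X]

/-- A set is semi-open if it is contained in the closure of its interior. -/
def SemiOpen (A : Set X) : Prop := A ⊆ closure (interior A)

/-- A set is sg-closed if `A ∪ interior (closure A)` (= its semi-closure) is contained in
every semi-open superset of `A`. -/
def SgClosed (A : Set X) : Prop :=
  ∀ U : Set X, SemiOpen U → A ⊆ U → A ∪ interior (closure A) ⊆ U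

/-- A set is sg-open if its complement is sg-closed. -/
def SgOpen (A : Set X) : Prop := SgClosed Aᶜ


/-- An arbitrary intersection of sg-closed sets is sg-closed. -/
theorem sInter_sgClosed (𝒜 : Set (Set X)) (h : ∀ A ∈ 𝒜, SgClosed A) :
    SgClosed (⋂₀ 𝒜) := by
  intro U hU hIU
  set I : Set X := ⋂₀ 𝒜 with hI
  apply union_subset hIU
  intro x hx
  by_contra hxU
  have hxI : x ∉ I := fun hxI => hxU (hIU hxI)
  by_cases hsc : interior (closure ({x} : Set X)) ⊆ {x}
  · -- {x} is semi-closed, so its complement is semi-open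
    obtain ⟨A, hA, hxA⟩ : ∃ A ∈ 𝒜, x ∉ A := by
      simpa [hI, mem_sInter] using hxI
    have hso : SemiOpen ({x}ᶜ : Set X) := by
      unfold SemiOpen
      rw [interior_compl, closure_compl]
      exact compl_subset_compl.mpr hsc
    have hAx : A ⊆ ({x}ᶜ : Set X) := fun y hy hyx => by
      simp only [mem_singleton_iff] at hyx; exact hxA (hyx ▸ hy)
    have := h A hA ({x}ᶜ) hso hAx (Or.inr (interior_mono (closure_mono
      (sInter_subset_of_mem hA)) hx))
    exact this rfl
  · -- {x} is not semi-closed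
    set V : Set X := interior (closure ({x} : Set X)) with hV
    have hxV : x ∈ V := by
      obtain ⟨y, hyV, _⟩ := not_subset.mp hsc
      have hycl : y ∈ closure ({x} : Set X) := interior_subset hyV
      rcases (mem_closure_iff.mp hycl) V isOpen_interior hyV with ⟨z, hzV, hz⟩
      simp only [mem_singleton_iff] at hz
      exact hz ▸ hzV
    -- F = sCl(I) ∩ Uᶜ is semi-closed and contains x
    set F : Set X := (I ∪ interior (closure I)) ∩ Uᶜ with hF
    have hxF : x ∈ F := ⟨Or.inr hx, hxU⟩
    have hFsc : interior (closure F) ⊆ F := by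
      intro y hy
      have h1 : closure F ⊆ closure I := by
        refine subset_trans (closure_mono (inter_subset_left)) ?_
        rw [closure_union]
        exact union_subset subset_rfl
          (by simpa using closure_mono (interior_subset : interior (closure I) ⊆ closure I))
      have h2 : closure F ⊆ (interior U)ᶜ := by
        refine subset_trans (closure_mono (inter_subset_right)) ?_
        rw [closure_compl]
      constructor
      · exact Or.inr (interior_mono h1 hy)
      · intro hyU
        have h3 := interior_mono h2 hy
        rw [interior_compl] at h3
        exact h3 (hU hyU)
    have hVF : V ⊆ F :=
      subset_trans (interior_mono (closure_mono (singleton_subset_iff.mpr hxF))) hFsc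
    -- F is disjoint from I, hence F ⊆ interior (closure I) ⊆ closure I
    have hFclI : F ⊆ closure I := by
      rintro y ⟨hy1, hy2⟩
      rcases hy1 with hy | hy
      · exact absurd (hIU hy) hy2
      · exact interior_subset hy
    -- V is a nonempty open set inside closure I, so it meets I
    have hxclI : x ∈ closure I := hFclI hxF
    rcases (mem_closure_iff.mp hxclI) V isOpen_interior hxV with ⟨z, hzV, hzI⟩
    exact (hVF hzV).2 (hIU hzI)
end

section
/- For any subset A of a topological space X, the semi-interior of A equals A ∩ closure(interior(A)), and the semi-closure of A equals A ∪ interior(closure(A)). -/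
open Set Topology

variable {X : Type*} [TopologicalSpace X]

/-- A set is semi-closed if it contains the interior of its closure. -/
def SemiClosed (A : Set X) : Prop := interior (closure A) ⊆ A

/-- The semi-interior: union of all semi-open subsets of `A`. -/
def sInt (A : Set X) : Set X := ⋃₀ {S | SemiOpen S ∧ S ⊆ A}

/-- The semi-closure: intersection of all semi-closed supersets of `A`. -/
def sCl (A : Set X) : Set X := ⋂₀ {S | SemiClosed S ∧ A ⊆ S}

theorem sInt_eq_and_sCl_eq (A : Set X) :
    sInt A = A ∩ closure (interior A) ∧ sCl A = A ∪ interior (closure A) := by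
  constructor
  · apply subset_antisymm
    · intro x hx
      obtain ⟨S, ⟨hS, hSA⟩, hxS⟩ := hx
      exact ⟨hSA hxS, closure_mono (interior_mono hSA) (hS hxS)⟩
    · intro x hx
      refine ⟨A ∩ closure (interior A), ⟨?_, inter_subset_left⟩, hx⟩
      intro y hy
      have h1 : interior A ⊆ A ∩ closure (interior A) :=
        subset_inter interior_subset subset_closure
      exact closure_mono (interior_maximal h1 isOpen_interior) hy.2
  · apply subset_antisymm
    · intro x hx
      apply hx
      refine ⟨?_, subset_union_left⟩
      have hcl : closure (A ∪ interior (closure A)) = closure A := by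
        apply subset_antisymm
        · rw [closure_union]
          exact union_subset subset_rfl
            (closure_minimal (interior_subset.trans subset_rfl) isClosed_closure)
        · exact closure_mono subset_union_left
      show interior (closure (A ∪ interior (closure A))) ⊆ _
      rw [hcl]
      exact subset_union_right
    · intro x hx
      intro S hS
      obtain ⟨hSc, hAS⟩ := hS
      rcases hx with hx | hx
      · exact hAS hx
      · exact hSc (interior_mono (closure_mono hAS) hx)
end

section
/- A subset A of a topological space X is sg-closed if and only if X₁ ∩ interior(closure(A)) ⊆ A, where X₁ is the set of points x such that {x} is nowhere dense. -/
open Set Topology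

variable {X : Type*} [TopologicalSpace X]

theorem sgClosed_iff (A : Set X) :
    SgClosed A ↔ {x : X | IsNowhereDense ({x} : Set X)} ∩ interior (closure A) ⊆ A := by
  constructor
  · intro hA x ⟨hx1, hx2⟩
    by_contra hxA
    have hsemi : SemiOpen ({x}ᶜ : Set X) := by
      intro y _
      rw [interior_compl, closure_compl, hx1, compl_empty]
      trivial
    have := hA {x}ᶜ hsemi (fun a ha hax => hxA (hax ▸ ha)) (Or.inr hx2)
    exact this rfl
  · intro h U hU hAU x hx
    rcases hx with hx | hx
    · exact hAU hx
    by_cases hxA : x ∈ A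
    · exact hAU hxA
    -- x is not nowhere dense
    have hnd : ¬ IsNowhereDense ({x} : Set X) := fun hnd => hxA (h ⟨hnd, hx⟩)
    have hV : (interior (closure ({x} : Set X))).Nonempty :=
      nonempty_iff_ne_empty.2 hnd
    set V := interior (closure ({x} : Set X)) with hVdef
    -- any nonempty open subset of closure {x} contains x
    have key : ∀ O : Set X, IsOpen O → O ⊆ closure ({x} : Set X) → O.Nonempty → x ∈ O := by
      intro O hO hOsub ⟨y, hy⟩
      have hy' := hOsub hy
      rcases (mem_closure_iff.1 hy') O hO hy with ⟨z, hzO, hz⟩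
      rcases hz with rfl
      exact hzO
    have hxV : x ∈ V := key V isOpen_interior interior_subset hV
    -- W = V ∩ interior (closure A) is an open nbhd of x inside closure A
    have hxW : x ∈ V ∩ interior (closure A) := ⟨hxV, hx⟩
    have hWopen : IsOpen (V ∩ interior (closure A)) :=
      isOpen_interior.inter isOpen_interior
    have hxclA : x ∈ closure A := interior_subset hx
    rcases (mem_closure_iff.1 hxclA) _ hWopen hxW with ⟨a, ⟨haV, _⟩, haA⟩
    -- a ∈ A ⊆ U ⊆ closure (interior U), and V is an open nbhd of a
    have haU : a ∈ closure (interior U) := hU (hAU haA)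
    rcases (mem_closure_iff.1 haU) V isOpen_interior haV with ⟨b, hbV, hbU⟩
    -- V ∩ interior U is nonempty open subset of closure {x}, hence contains x
    have : x ∈ V ∩ interior U :=
      key _ (isOpen_interior.inter isOpen_interior)
        (fun z hz => interior_subset hz.1) ⟨b, hbV, hbU⟩
    exact interior_subset this.2
end

section
/- Every singleton in a topological space is either sg-open or sg-closed. -/
open Set Topology

variable {X : Type*} [TopologicalSpace X]

theorem singleton_sgOpen_or_sgClosed (x : X) :
    SgOpen ({x} : Set X) ∨ SgClosed ({x} : Set X) := by
  by_cases h : interior (closure ({x} : Set X)) = ∅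
  · right
    intro U hU hsub
    rw [h, union_empty]
    exact hsub
  · left
    -- interior (closure {x}) is a nonempty open subset of closure {x}, so it contains x
    have hV : IsOpen (interior (closure ({x} : Set X))) := isOpen_interior
    obtain ⟨y0, hy0⟩ := nonempty_iff_ne_empty.mpr h
    have hxV : x ∈ interior (closure ({x} : Set X)) := by
      have hy0c : y0 ∈ closure ({x} : Set X) := interior_subset hy0
      obtain ⟨z, hz1, hz2⟩ := (mem_closure_iff.mp hy0c) _ hV hy0
      rw [mem_singleton_iff] at hz2
      rwa [hz2] at hz1
    intro U hU hsub
    intro y hy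
    by_cases hyx : y = x
    · subst hyx
      have hyI : y ∈ interior (closure (({y} : Set X)ᶜ)) := by
        rcases hy with h1 | h2
        · exact absurd rfl h1
        · exact h2
      by_contra hyU
      -- then U = {y}ᶜ
      have hUeq : U = ({y} : Set X)ᶜ := by
        apply Subset.antisymm _ hsub
        intro a ha hay
        exact hyU (mem_singleton_iff.mp hay ▸ ha)
      rw [hUeq] at hU
      -- y ∈ closure (interior {y}ᶜ)
      have h1 : y ∈ closure (interior (({y} : Set X)ᶜ)) := by
        have : closure (({y} : Set X)ᶜ) ⊆ closure (interior (({y} : Set X)ᶜ)) := by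
          rw [← closure_closure (s := interior (({y} : Set X)ᶜ))]
          exact closure_mono hU
        exact this (interior_subset hyI)
      obtain ⟨z, hz1, hz2⟩ := (mem_closure_iff.mp h1) _ hV hxV
      have hzc : z ∈ closure ({y} : Set X) := interior_subset hz1
      obtain ⟨w, hw1, hw2⟩ := (mem_closure_iff.mp hzc) _ isOpen_interior hz2
      rw [mem_singleton_iff.mp hw2] at hw1
      exact (interior_subset hw1) rfl
    · exact hsub hyx
end

section
/- Every topological space X decomposes as the disjoint union of X₁ = {x : {x} is nowhere dense} and X₂ = {x : {x} is locally dense}, and moreover every singleton in X₂ is sg-open. -/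
open Set Topology

variable {X : Type*} [TopologicalSpace X]

lemma key_nwd (x : X) (h : x ∉ interior (closure ({x} : Set X))) :
    IsNowhereDense ({x} : Set X) := by
  rw [IsNowhereDense]
  by_contra hne
  obtain ⟨y, hy⟩ := nonempty_iff_ne_empty.mpr hne
  have hyc : y ∈ closure ({x} : Set X) := interior_subset hy
  obtain ⟨z, hz, hz'⟩ := mem_closure_iff.mp hyc _ isOpen_interior hy
  rw [mem_singleton_iff] at hz'
  exact h (hz' ▸ hz)

theorem jankovic_reilly_decomposition :
    {x : X | IsNowhereDense ({x} : Set X)} ∪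
      {x : X | ({x} : Set X) ⊆ interior (closure ({x} : Set X))} = univ ∧
    {x : X | IsNowhereDense ({x} : Set X)} ∩
      {x : X | ({x} : Set X) ⊆ interior (closure ({x} : Set X))} = ∅ ∧
    ∀ x ∈ {x : X | ({x} : Set X) ⊆ interior (closure ({x} : Set X))},
      SgOpen ({x} : Set X) := by
  refine ⟨?_, ?_, ?_⟩
  · ext x
    simp only [mem_union, mem_setOf_eq, mem_univ, iff_true]
    by_cases h : x ∈ interior (closure ({x} : Set X))
    · exact Or.inr (singleton_subset_iff.mpr h)
    · exact Or.inl (key_nwd x h)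
  · ext x
    simp only [mem_inter_iff, mem_setOf_eq, mem_empty_iff_false, iff_false, not_and]
    intro hnd hld
    have := singleton_subset_iff.mp hld
    rw [hnd] at this
    exact this
  · intro x hx U hU hsub y hy
    rcases hy with hy | hy
    · exact hsub hy
    -- y ∈ interior (closure {x}ᶜ); if y ≠ x, done; otherwise show x ∈ U
    by_cases hyx : y = x
    swap
    · exact hsub hyx
    subst hyx
    by_contra hyU
    -- then U = {y}ᶜ hence hU gives {y}ᶜ ⊆ closure (interior {y}ᶜ)
    have hy2 : y ∈ interior (closure ({y} : Set X)) := singleton_subset_iff.mp hx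
    set V := interior (closure ({y} : Set X)) with hV
    -- V ∩ interior {y}ᶜ = ∅
    have hdis : ∀ z, z ∈ V → z ∉ interior ({y}ᶜ : Set X) := by
      intro z hz1 hz2
      have hzc : z ∈ closure ({y} : Set X) := interior_subset hz1
      obtain ⟨w, hw1, hw2⟩ := mem_closure_iff.mp hzc _ isOpen_interior hz2
      rw [mem_singleton_iff] at hw2
      subst hw2
      exact (interior_subset hw1) rfl
    -- W := V ∩ interior (closure {y}ᶜ) is open, contains x, ⊆ closure {y}ᶜ
    have hyW : y ∈ V ∩ interior (closure ({y}ᶜ : Set X)) := ⟨hy2, hy⟩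
    have hWopen : IsOpen (V ∩ interior (closure ({y}ᶜ : Set X))) :=
      isOpen_interior.inter isOpen_interior
    have hycl : y ∈ closure ({y}ᶜ : Set X) := interior_subset hy
    obtain ⟨y', hy'W, hy'c⟩ := mem_closure_iff.mp hycl _ hWopen hyW
    -- y' ∈ {y}ᶜ ⊆ U, and hU: U ⊆ closure (interior U). Since x ∉ U, U ⊆ {y}ᶜ? No: {y}ᶜ ⊆ U and x ∉ U, so U = {y}ᶜ
    have hUeq : U = ({y}ᶜ : Set X) := by
      apply Subset.antisymm _ hsub
      intro z hz
      intro hzx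
      rw [mem_singleton_iff] at hzx
      exact hyU (hzx ▸ hz)
    have hy'cl : y' ∈ closure (interior ({y}ᶜ : Set X)) := by
      have := hU (hUeq ▸ hy'c : y' ∈ U)
      rwa [hUeq] at this
    obtain ⟨w, hw1, hw2⟩ := mem_closure_iff.mp hy'cl _ hWopen hy'W
    exact hdis w hw1.1 hw2
end

section
/- Every subset of X₂ = {x ∈ X : {x} is locally dense} is sg-open. -/
open Set Topology

variable {X : Type*} [TopologicalSpace X]

theorem sgOpen_of_subset_X2 (A : Set X)
    (h : A ⊆ {x : X | ({x} : Set X) ⊆ interior (closure ({x} : Set X))}) :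
    SgOpen A := by
  intro U hU hsub
  rintro x (hx | hx)
  · exact hsub hx
  by_contra hxU
  have hxA : x ∈ A := by
    by_contra h'
    exact hxU (hsub h')
  have hD : x ∈ interior (closure ({x} : Set X)) := h hxA rfl
  have hxcl : x ∈ closure Aᶜ := interior_subset hx
  obtain ⟨y, hyD, hyA⟩ :=
    mem_closure_iff.mp hxcl _ isOpen_interior hD
  have hycl : y ∈ closure (interior U) := hU (hsub hyA)
  obtain ⟨z, hzD, hzU⟩ :=
    mem_closure_iff.mp hycl _ isOpen_interior hyD
  have hzcl : z ∈ closure ({x} : Set X) := interior_subset hzD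
  obtain ⟨w, hw1, hw2⟩ :=
    mem_closure_iff.mp hzcl (interior U) isOpen_interior hzU
  exact hxU (interior_subset (hw2 ▸ hw1))
end

section
/- A subset A of a topological space X is hereditarily sg-closed (i.e., every subset of A is sg-closed) if and only if X₁ ∩ interior(closure(A)) = ∅, where X₁ = {x : {x} is nowhere dense}. -/
open Set Topology

variable {X : Type*} [TopologicalSpace X]

theorem hereditarily_sgClosed_iff (A : Set X) :
    (∀ B ⊆ A, SgClosed B) ↔
      {x : X | IsNowhereDense ({x} : Set X)} ∩ interior (closure A) = ∅ := by
  constructor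
  · intro h
    rw [eq_empty_iff_forall_notMem]
    rintro x ⟨hx1, hx2⟩
    have hx1 : interior (closure ({x} : Set X)) = ∅ := hx1
    set B := A \ {x} with hB
    have hBA : B ⊆ A := diff_subset
    have hUso : SemiOpen ({x}ᶜ : Set X) := by
      intro y _
      rw [interior_compl, closure_compl, hx1]
      simp
    have hBU : B ⊆ ({x}ᶜ : Set X) := fun y hy => hy.2
    have hsub := h B hBA ({x}ᶜ) hUso hBU
    -- show x ∈ interior (closure B)
    have hclA : closure A ⊆ closure B ∪ closure {x} := by
      have hA : A ⊆ B ∪ {x} := fun y hy => by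
        by_cases hyx : y ∈ ({x} : Set X)
        · exact Or.inr hyx
        · exact Or.inl ⟨hy, hyx⟩
      calc closure A ⊆ closure (B ∪ {x}) := closure_mono hA
        _ = closure B ∪ closure {x} := closure_union
    have key : interior (closure A) ⊆ closure B := by
      intro w hw
      rw [mem_closure_iff]
      intro O hO hwO
      set O' := (O ∩ interior (closure A)) \ closure {x} with hO'
      have hO'open : IsOpen O' :=
        (hO.inter isOpen_interior).sdiff isClosed_closure
      have hO'ne : O'.Nonempty := by
        by_contra hne
        rw [not_nonempty_iff_eq_empty] at hne
        have hsub2 : O ∩ interior (closure A) ⊆ closure ({x} : Set X) := by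
          intro z hz
          by_contra hz'
          exact (eq_empty_iff_forall_notMem.mp hne z) ⟨hz, hz'⟩
        have : O ∩ interior (closure A) ⊆ interior (closure ({x} : Set X)) :=
          interior_maximal hsub2 (hO.inter isOpen_interior)
        rw [hx1] at this
        exact this ⟨hwO, hw⟩
      obtain ⟨z, hz⟩ := hO'ne
      have hzclB : z ∈ closure B := by
        rcases hclA (interior_subset hz.1.2) with hzB | hzx
        · exact hzB
        · exact absurd hzx hz.2
      obtain ⟨b, hbO', hbB⟩ := mem_closure_iff.mp hzclB O' hO'open hz
      exact ⟨b, hbO'.1.1, hbB⟩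
    have hxB : x ∈ interior (closure B) :=
      interior_maximal key isOpen_interior hx2
    exact hsub (Or.inr hxB) rfl
  · intro hemp B hBA U hU hBU
    rintro y (hy | hy)
    · exact hBU hy
    · have hyA : y ∈ interior (closure A) :=
        interior_mono (closure_mono hBA) hy
      have hnd : ¬ IsNowhereDense ({y} : Set X) := fun hcon =>
        (eq_empty_iff_forall_notMem.mp hemp y) ⟨hcon, hyA⟩
      have hne : (interior (closure ({y} : Set X))).Nonempty :=
        nonempty_iff_ne_empty.mpr hnd
      have hyV : y ∈ interior (closure ({y} : Set X)) := by
        obtain ⟨w, hw⟩ := hne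
        have hwcl : w ∈ closure ({y} : Set X) := interior_subset hw
        obtain ⟨z, hz1, hz2⟩ :=
          mem_closure_iff.mp hwcl _ isOpen_interior hw
        rw [mem_singleton_iff] at hz2
        exact hz2 ▸ hz1
      set W := interior (closure ({y} : Set X)) ∩ interior (closure B) with hW
      have hWopen : IsOpen W := isOpen_interior.inter isOpen_interior
      have hWy : y ∈ W := ⟨hyV, hy⟩
      have hyclB : y ∈ closure B := interior_subset hy
      obtain ⟨b, hbW, hbB⟩ := mem_closure_iff.mp hyclB W hWopen hWy
      have hbU : b ∈ closure (interior U) := hU (hBU hbB)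
      obtain ⟨p, hpW, hpint⟩ :=
        mem_closure_iff.mp hbU W hWopen hbW
      have hpcl : p ∈ closure ({y} : Set X) := interior_subset hpW.1
      obtain ⟨q, hq1, hq2⟩ :=
        mem_closure_iff.mp hpcl (interior U) isOpen_interior hpint
      rw [mem_singleton_iff] at hq2
      exact interior_subset (hq2 ▸ hq1)
end

section
/- Every nowhere dense subset of a topological space is hereditarily sg-closed. -/
open Set Topology

variable {X : Type*} [TopologicalSpace X]

theorem nowhereDense_hereditarily_sgClosed (A : Set X) (h : IsNowhereDense A) :
    ∀ B ⊆ A, SgClosed B := by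
  intro B hBA U _ hBU
  have hsub : interior (closure B) ⊆ interior (closure A) :=
    interior_mono (closure_mono hBA)
  rw [h] at hsub
  intro x hx
  rcases hx with hx | hx
  · exact hBU hx
  · exact absurd (hsub hx) (notMem_empty x)
end

section
/- If A is sg-closed and B is closed in a topological space X, then A ∪ B is sg-closed. -/
open Set Topology

variable {X : Type*} [TopologicalSpace X]

theorem sgClosed_union_closed (A B : Set X) (hA : SgClosed A) (hB : IsClosed B) :
    SgClosed (A ∪ B) := by
  intro U hU hAU
  have hAsub : A ⊆ U := subset_union_left.trans hAU
  have hIA : interior (closure A) ⊆ U := fun x hx => hA U hU hAsub (Or.inr hx)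
  rintro x (hx | hx)
  · exact hAU hx
  · by_cases hxB : x ∈ B
    · exact hAU (Or.inr hxB)
    · have hopen : IsOpen (interior (closure (A ∪ B)) ∩ Bᶜ) :=
        isOpen_interior.inter hB.isOpen_compl
      have hsub : interior (closure (A ∪ B)) ∩ Bᶜ ⊆ closure A := by
        rintro y ⟨hy1, hy2⟩
        have hy : y ∈ closure (A ∪ B) := interior_subset hy1
        rw [closure_union, hB.closure_eq] at hy
        exact hy.resolve_right hy2
      exact hIA (interior_maximal hsub hopen ⟨hx, hxB⟩)
end

section
/- The intersection of an sg-open set and an open set is sg-open. -/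
open Set Topology

variable {X : Type*} [TopologicalSpace X]

theorem sgOpen_inter_open (A B : Set X) (hA : SgOpen A) (hB : IsOpen B) :
    SgOpen (A ∩ B) := by
  intro U hU hsub
  rw [Set.compl_inter] at hsub ⊢
  have hCU : Aᶜ ⊆ U := (Set.subset_union_left).trans hsub
  have hkey : interior (closure Aᶜ) ⊆ U :=
    (Set.union_subset_iff.mp (hA U hU hCU)).2
  rintro x (hx | hx)
  · exact hsub hx
  · by_cases hxB : x ∈ Bᶜ
    · exact hsub (Or.inr hxB)
    · have hxB' : x ∈ B := not_not.mp hxB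
      have hcl : closure (Aᶜ ∪ Bᶜ) ⊆ closure Aᶜ ∪ Bᶜ := by
        rw [closure_union, (hB.isClosed_compl).closure_eq]
      have h1 : x ∈ interior (closure Aᶜ ∪ Bᶜ) :=
        interior_mono hcl hx
      have h2 : x ∈ interior ((closure Aᶜ ∪ Bᶜ) ∩ B) := by
        have : interior (closure Aᶜ ∪ Bᶜ) ∩ B ⊆ interior ((closure Aᶜ ∪ Bᶜ) ∩ B) :=
          interior_maximal (Set.inter_subset_inter_left B interior_subset)
            (isOpen_interior.inter hB)
        exact this ⟨h1, hxB'⟩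
      have h3 : (closure Aᶜ ∪ Bᶜ) ∩ B ⊆ closure Aᶜ := by
        rintro y ⟨hy1 | hy1, hy2⟩
        · exact hy1
        · exact absurd hy2 hy1
      exact hkey (interior_mono h3 h2)
end

section
/- Every sg-closed set is semi-preclosed (β-closed), i.e., if A is sg-closed then interior(closure(interior(A))) ⊆ A. -/
open Set Topology

variable {X : Type*} [TopologicalSpace X]

theorem sgClosed_semiPreclosed (A : Set X) (hA : SgClosed A) :
    interior (closure (interior A)) ⊆ A := by
  intro x hx
  by_contra hxA
  set U : Set X := A ∪ (closure (interior A))ᶜ with hU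
  have hsub : interior A ∪ (closure (interior A))ᶜ ⊆ interior U := by
    apply interior_maximal
    · exact union_subset_union_left _ interior_subset
    · exact (isOpen_interior.union isClosed_closure.isOpen_compl)
  have h1 : closure (interior A ∪ (closure (interior A))ᶜ) = univ := by
    apply eq_univ_of_forall
    intro y
    by_cases hy : y ∈ closure (interior A)
    · exact closure_mono subset_union_left hy
    · exact subset_closure (Or.inr hy)
  have hcl : closure (interior U) = univ := eq_univ_of_subset (closure_mono hsub) h1
  have hsemi : SemiOpen U := by rw [SemiOpen, hcl]; exact subset_univ _
  have h := hA U hsemi subset_union_left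
    (Or.inr (interior_mono (closure_mono interior_subset) hx))
  rcases h with h | h
  · exact hxA h
  · exact h (interior_subset hx)
end

section
/- A subset of a topological space is regular open if and only if it is α-open and sg-closed. -/
open Set Topology

variable {X : Type*} [TopologicalSpace X]

theorem regularOpen_iff_alphaOpen_and_sgClosed (A : Set X) :
    A = interior (closure A) ↔
      (A ⊆ interior (closure (interior A)) ∧ SgClosed A) := by
  constructor
  · intro h
    have hA : IsOpen A := h ▸ isOpen_interior
    refine ⟨?_, ?_⟩
    · rw [hA.interior_eq]; exact h.le
    · intro U hU hAU
      rw [← h, union_self]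
      exact hAU
  · rintro ⟨hα, hsg⟩
    apply Subset.antisymm
    · exact hα.trans (interior_mono (closure_mono interior_subset))
    · intro x hx
      by_contra hxA
      by_cases hcase : interior (closure ({x} : Set X)) ⊆ {x}
      · have hsemi : SemiOpen ({x}ᶜ : Set X) := by
          intro y hy
          rw [interior_compl, closure_compl]
          exact fun hmem => hy (hcase hmem)
        have hAx : A ⊆ ({x}ᶜ : Set X) := fun y hyA hyx => hxA (mem_singleton_iff.mp hyx ▸ hyA)
        exact hsg _ hsemi hAx (Or.inr hx) rfl
      · obtain ⟨y, hy, hyx⟩ := not_subset.mp hcase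
        -- V := interior (closure {x}) is open nonempty, ⊆ closure A ⊆ closure (interior A)
        have hxcl : x ∈ closure A := interior_subset hx
        have hclx : closure ({x} : Set X) ⊆ closure A :=
          closure_minimal (singleton_subset_iff.mpr hxcl) isClosed_closure
        have hclA : closure A ⊆ closure (interior A) :=
          closure_minimal (hα.trans interior_subset) isClosed_closure
        have hV : interior (closure ({x} : Set X)) ⊆ closure (interior A) :=
          fun z hz => hclA (hclx (interior_subset hz))
        -- y ∈ closure (interior A), and interior (closure {x}) is an open nbhd of y
        have : (interior (closure ({x} : Set X)) ∩ interior A).Nonempty := by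
          have hy' : y ∈ closure (interior A) := hV hy
          exact mem_closure_iff.mp hy' _ isOpen_interior hy
        obtain ⟨z, hzV, hzA⟩ := this
        have hzclx : z ∈ closure ({x} : Set X) := interior_subset hzV
        have : x ∈ interior A := by
          obtain ⟨w, hwA, hwx⟩ := mem_closure_iff.mp hzclx _ isOpen_interior hzA
          rwa [mem_singleton_iff.mp hwx] at hwA
        exact hxA (interior_subset this)
end

section
/- If X₁ = X (every singleton is nowhere dense), then a subset of X is sg-closed if and only if it is semi-closed. -/
open Set Topology

variable {X : Type*} [TopologicalSpace X]

theorem sgClosed_iff_semiClosed_of_X1_eq_univ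
    (h : ∀ x : X, IsNowhereDense ({x} : Set X)) (A : Set X) :
    SgClosed A ↔ interior (closure A) ⊆ A := by
  constructor
  · intro hsg x hx
    by_contra hxA
    have hsub : A ⊆ ({x} : Set X)ᶜ := fun y hy hyx => hxA (mem_singleton_iff.mp hyx ▸ hy)
    have hso : SemiOpen ({x}ᶜ : Set X) := by
      intro y _
      rw [interior_compl, closure_compl, h x, compl_empty]
      trivial
    exact hsg _ hso hsub (Or.inr hx) rfl
  · intro hsc U hU hAU
    exact union_subset hAU (hsc.trans hAU)
end

section
/- An infinite set endowed with the cofinite topology is sg-compact, i.e., every cover by sg-open sets has a finite subcover. -/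
open Set Topology

variable {X : Type*} [TopologicalSpace X]

lemma sgClosed_eq_univ_of_infinite {Y : Type*} [TopologicalSpace Y]
    (hcof : ∀ s : Set Y, IsOpen s ↔ s = ∅ ∨ sᶜ.Finite)
    {B : Set Y} (hB : SgClosed B) (hinf : B.Infinite) : B = univ := by
  by_contra hne
  obtain ⟨x, hx⟩ : ∃ x, x ∉ B := by
    by_contra h
    push_neg at h
    exact hne (eq_univ_of_forall h)
  set U : Set Y := {x}ᶜ with hU
  have hUopen : IsOpen U := by
    rw [hcof]
    right
    simp [hU]
  have hUinf : U.Infinite := by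
    have : (B \ {x}).Infinite := hinf.diff (finite_singleton x)
    exact this.mono (by intro y hy; exact hy.2)
  have hclU : closure U = univ := by
    have hcl : IsClosed (closure U) := isClosed_closure
    have : IsOpen (closure U)ᶜ := hcl.isOpen_compl
    rw [hcof] at this
    rcases this with h | h
    · rw [← compl_empty, ← h, compl_compl]
    · rw [compl_compl] at h
      exact absurd (h.subset subset_closure) hUinf
  have hsemi : SemiOpen U := by
    rw [SemiOpen, hUopen.interior_eq, hclU]
    exact subset_univ U
  have hsub : B ⊆ U := by
    intro y hy
    simp only [hU, mem_compl_iff, mem_singleton_iff]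
    rintro rfl; exact hx hy
  have hclB : closure B = univ := by
    have hcl : IsClosed (closure B) := isClosed_closure
    have : IsOpen (closure B)ᶜ := hcl.isOpen_compl
    rw [hcof] at this
    rcases this with h | h
    · rw [← compl_empty, ← h, compl_compl]
    · rw [compl_compl] at h
      exact absurd (h.subset subset_closure) hinf
  have := hB U hsemi hsub
  rw [hclB, interior_univ] at this
  exact (this (Or.inr (mem_univ x))) rfl

theorem cofinite_sgCompact {Y : Type*} [TopologicalSpace Y] [Infinite Y]
    (hcof : ∀ s : Set Y, IsOpen s ↔ s = ∅ ∨ sᶜ.Finite) :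
    ∀ 𝒰 : Set (Set Y), (∀ U ∈ 𝒰, SgOpen U) → ⋃₀ 𝒰 = univ →
      ∃ ℱ ⊆ 𝒰, ℱ.Finite ∧ ⋃₀ ℱ = univ := by
  intro 𝒰 hsg hcov
  have hx : ∀ x : Y, ∃ U, U ∈ 𝒰 ∧ x ∈ U := by
    intro x
    have : x ∈ ⋃₀ 𝒰 := hcov ▸ mem_univ x
    obtain ⟨U, hU, hxU⟩ := this
    exact ⟨U, hU, hxU⟩
  choose f hf1 hf2 using hx
  obtain ⟨y⟩ := ‹Infinite Y›.nonempty
  set U₀ := f y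
  have hU₀ : U₀ ∈ 𝒰 := hf1 y
  have hU₀c : U₀ᶜ.Finite := by
    by_contra hinf
    rw [← Set.not_infinite, not_not] at hinf
    have := sgClosed_eq_univ_of_infinite hcof (hsg U₀ hU₀) hinf
    have : y ∈ U₀ᶜ := this ▸ mem_univ y
    exact this (hf2 y)
  refine ⟨insert U₀ (f '' U₀ᶜ), ?_, ?_, ?_⟩
  · intro V hV
    rcases hV with rfl | ⟨x, _, rfl⟩
    · exact hU₀
    · exact hf1 x
  · exact (hU₀c.image f).insert U₀
  · apply eq_univ_of_forall
    intro x
    by_cases hxU : x ∈ U₀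
    · exact ⟨U₀, Or.inl rfl, hxU⟩
    · exact ⟨f x, Or.inr ⟨x, hxU, rfl⟩, hf2 x⟩
end

section
/- A topological space has T₀ separation if and only if every finite subset is scattered (as a subspace). -/
open Set Topology

variable {X : Type*} [TopologicalSpace X]

/-- A subset `S` is scattered: every nonempty subset of `S` has a point isolated in it. -/
def Scattered (S : Set X) : Prop :=
  ∀ T ⊆ S, T.Nonempty → ∃ x ∈ T, ∃ U : Set X, IsOpen U ∧ U ∩ T = {x}

/-! A finite T₀ space has an open point; applied to the subspace `T`, this isolates a point of
every finite nonempty `T`. Conversely, an open set cutting out one point of `{x, y}` separates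
`x` from `y` unless `x = y`. -/

theorem Set.Finite.exists_isOpen_inter_eq_singleton [T0Space X] {T : Set X} (hT : T.Finite)
    (hne : T.Nonempty) : ∃ x ∈ T, ∃ U : Set X, IsOpen U ∧ U ∩ T = {x} := by
  have : Finite T := hT.to_subtype
  have : Nonempty T := hne.to_subtype
  obtain ⟨⟨x, hx⟩, hopen⟩ := exists_open_singleton_of_finite (X := T)
  obtain ⟨U, hU, hpre⟩ := isOpen_induced_iff.mp hopen
  have hpre' : ((↑) : T → X) ⁻¹' U = (↑) ⁻¹' {x} := by
    rw [hpre]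
    ext
    simp [Subtype.ext_iff]
  refine ⟨x, hx, U, hU, ?_⟩
  rw [inter_comm, Subtype.preimage_coe_eq_preimage_coe_iff.mp hpre', inter_singleton_of_mem hx]

theorem Set.Finite.scattered [T0Space X] {S : Set X} (hS : S.Finite) : Scattered S :=
  fun _ hTS hne => (hS.subset hTS).exists_isOpen_inter_eq_singleton hne

theorem Scattered.eq_of_inseparable {x y : X} (h : Scattered ({x, y} : Set X))
    (hxy : Inseparable x y) : x = y := by
  obtain ⟨a, ha, U, hU, hUa⟩ := h _ subset_rfl (insert_nonempty x {y})
  have haU : a ∈ U := (hUa.symm ▸ mem_singleton a : a ∈ U ∩ {x, y}).1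
  have hxU : x ∈ U := by
    rcases ha with rfl | rfl
    · exact haU
    · exact (hxy.mem_open_iff hU).mpr haU
  have hx : x ∈ U ∩ {x, y} := ⟨hxU, mem_insert x {y}⟩
  have hy : y ∈ U ∩ {x, y} := ⟨(hxy.mem_open_iff hU).mp hxU, mem_insert_of_mem x rfl⟩
  rw [hUa] at hx hy
  exact hx.trans hy.symm

theorem t0_iff_finite_scattered :
    T0Space X ↔ ∀ S : Set X, S.Finite → Scattered S := by
  constructor
  · intro _ S hS
    exact hS.scattered
  · intro h
    exact (t0Space_iff_inseparable X).mpr fun x y => (h {x, y} (toFinite _)).eq_of_inseparable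
end

section
/- A topological space X is N-scattered (every nowhere dense subset is scattered) if and only if the boundary of every open subset of X is scattered. -/
open Set Topology

variable {X : Type*} [TopologicalSpace X]

theorem nScattered_iff_frontier_of_open_scattered :
    (∀ A : Set X, IsNowhereDense A → Scattered A) ↔
      ∀ U : Set X, IsOpen U → Scattered (frontier U) := by
  constructor
  · intro h U hU
    apply h
    rw [IsNowhereDense, (isClosed_frontier).closure_eq]
    rw [← frontier_compl]
    exact interior_frontier hU.isClosed_compl
  · intro h A hA T hT hTne
    have hcl : closure ((closure A)ᶜ) = univ := by
      rw [closure_compl, hA, compl_empty]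
    have hfr : frontier ((closure A)ᶜ) = closure A := by
      rw [frontier, isOpen_compl_iff.mpr isClosed_closure |>.interior_eq, hcl,
        diff_compl, univ_inter]
    exact h _ (isOpen_compl_iff.mpr isClosed_closure) T
      (by rw [hfr]; exact hT.trans subset_closure) hTne
end
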